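/- For the cycle C_n with n ≥ 3, the strong metric dimension of C_n equals ⌈n/2⌉. -/

import Mathlib

open SimpleGraph

/-- One step of the zero forcing color-change rule: add every white vertex that is
the unique white neighbor of some black vertex. -/
def zfStep {V : Type*} (G : SimpleGraph V) (B : Set V) : Set V :=
  B ∪ {w | ∃ u ∈ B, G.Adj u w ∧ ∀ x, G.Adj u x → x ∉ B → x = w}

/-- `S` is a zero forcing set if iterating the color-change rule blackens all vertices. -/
def IsZeroForcingSet {V : Type*} (G : SimpleGraph V) (S : Set V) : Prop :=
  ∃ n : ℕ, (zfStep G)^[n] S = Set.univ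

/-- The zero forcing number: minimum cardinality of a zero forcing set. -/
noncomputable def zeroForcingNumber {V : Type*} (G : SimpleGraph V) : ℕ :=
  sInf {n | ∃ S : Set V, S.ncard = n ∧ IsZeroForcingSet G S}

/-- A (finite) graph is a path graph: nonempty, connected, acyclic, max degree ≤ 2. -/
def IsPathGraph {V : Type*} (G : SimpleGraph V) : Prop :=
  Nonempty V ∧ G.Connected ∧ G.IsAcyclic ∧ ∀ v : V, (G.neighborSet v).ncard ≤ 2

/-- The path cover number: minimum number of vertex-disjoint induced paths covering `V`. -/
noncomputable def pathCoverNumber {V : Type*} (G : SimpleGraph V) : ℕ :=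
  sInf {n | ∃ P : Finset (Set V), P.card = n ∧
    (∀ S ∈ P, IsPathGraph (G.induce S)) ∧
    (P : Set (Set V)).PairwiseDisjoint id ∧ ⋃₀ (P : Set (Set V)) = Set.univ}

/-- `u` lies on an `x`–`v` geodesic. -/
def LiesBetween {V : Type*} (G : SimpleGraph V) (x u v : V) : Prop :=
  G.dist x u + G.dist u v = G.dist x v

/-- `x` strongly resolves the pair `u, v`. -/
def StronglyResolves {V : Type*} (G : SimpleGraph V) (x u v : V) : Prop :=
  LiesBetween G x u v ∨ LiesBetween G x v u

/-- `W` is a strong resolving set of `G`. -/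
def IsStrongResolvingSet {V : Type*} (G : SimpleGraph V) (W : Set V) : Prop :=
  ∀ u v : V, u ≠ v → ∃ x ∈ W, StronglyResolves G x u v

/-- The strong metric dimension: minimum cardinality of a strong resolving set. -/
noncomputable def sdim {V : Type*} (G : SimpleGraph V) : ℕ :=
  sInf {n | ∃ W : Set V, W.ncard = n ∧ IsStrongResolvingSet G W}

/-- A leaf is a vertex of degree one. -/
def IsLeaf {V : Type*} (G : SimpleGraph V) (v : V) : Prop :=
  (G.neighborSet v).ncard = 1

/-- `σ(G)`: the number of leaves of `G`. -/
noncomputable def leafCount {V : Type*} (G : SimpleGraph V) : ℕ :=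
  {v | IsLeaf G v}.ncard

namespace CycleSdim

open scoped Fin.CommRing Fin.NatCast

variable {n : ℕ}

lemma val_one_cyc (hn : 3 ≤ n) [NeZero n] : (1 : Fin n).val = 1 := by
  rw [Fin.val_one']
  exact Nat.mod_eq_of_lt (by omega)

lemma val_sub (u v : Fin n) :
    (v - u).val = if u.val ≤ v.val then v.val - u.val else v.val + n - u.val := by
  have hu := u.isLt
  have hv := v.isLt
  rcases le_or_gt u.val v.val with h | h
  · rw [Fin.sub_def]
    simp only [if_pos h]
    have he : n - u.val + v.val = (v.val - u.val) + n := by omega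
    rw [he, Nat.add_mod_right, Nat.mod_eq_of_lt (by omega)]
  · rw [Fin.sub_def]
    simp only [if_neg (not_le.mpr h)]
    rw [Nat.mod_eq_of_lt (by omega)]
    omega

lemma sub_val_add (u v : Fin n) (huv : u ≠ v) :
    (u - v).val + (v - u).val = n := by
  have hu := u.isLt
  have hv := v.isLt
  have hne : u.val ≠ v.val := fun h => huv (Fin.ext h)
  rw [val_sub, val_sub]
  split <;> split <;> omega

/-- the distance function on the cycle -/
def cdist (n : ℕ) (u v : Fin n) : ℕ := min (v - u).val (n - (v - u).val)

lemma conn (hn : 3 ≤ n) : (cycleGraph n).Connected := by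
  obtain ⟨m, rfl⟩ : ∃ m, n = m + 1 := ⟨n - 1, by omega⟩
  exact cycleGraph_connected

lemma dist_le_vsub (hn : 3 ≤ n) (u v : Fin n) :
    (cycleGraph n).dist u v ≤ (v - u).val := by
  haveI : NeZero n := ⟨by omega⟩
  suffices h : ∀ k : ℕ, ∀ v : Fin n, (v - u).val = k → (cycleGraph n).dist u v ≤ k by
    exact h _ v rfl
  intro k
  induction k with
  | zero =>
    intro v hk
    have h0 : v - u = 0 := Fin.ext (by simpa using hk)
    have hvu : v = u := sub_eq_zero.mp h0
    simp [hvu]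
  | succ k ih =>
    intro v hk
    have h1 : (v - 1 - u).val = k := by
      have : v - 1 - u = (v - u) - 1 := by ring
      rw [this, val_sub]
      rw [val_one_cyc hn]
      rw [if_pos (by omega)]
      omega
    have hadj : (cycleGraph n).Adj (v - 1) v := by
      rw [cycleGraph_adj']
      right
      rw [sub_sub_cancel, val_one_cyc hn]
    calc (cycleGraph n).dist u v
        ≤ (cycleGraph n).dist u (v - 1) + (cycleGraph n).dist (v - 1) v :=
          (conn hn).dist_triangle
      _ ≤ k + 1 := by
          have h2 : (cycleGraph n).dist (v - 1) v = 1 := dist_eq_one_iff_adj.mpr hadj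
          have := ih (v - 1) h1
          omega

lemma lipschitz (hn : 3 ≤ n) {u w : Fin n} (v : Fin n) (h : (cycleGraph n).Adj u w) :
    cdist n u v ≤ cdist n w v + 1 := by
  haveI : NeZero n := ⟨by omega⟩
  have hlt := (v - u).isLt
  have hlt' := (v - w).isLt
  rw [cycleGraph_adj'] at h
  unfold cdist
  rcases h with h | h
  · have hv : v - w = (v - u) + (u - w) := by ring
    have hval : (v - w).val = ((v - u).val + 1) % n := by
      rw [hv, Fin.add_def, h]
    rcases Nat.lt_or_ge ((v - u).val + 1) n with h2 | h2
    · rw [Nat.mod_eq_of_lt h2] at hval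
      omega
    · have h3 : (v - u).val + 1 = n := by omega
      rw [h3, Nat.mod_self] at hval
      omega
  · have hv : v - u = (v - w) + (w - u) := by ring
    have hval : (v - u).val = ((v - w).val + 1) % n := by
      rw [hv, Fin.add_def, h]
    rcases Nat.lt_or_ge ((v - w).val + 1) n with h2 | h2
    · rw [Nat.mod_eq_of_lt h2] at hval
      omega
    · have h3 : (v - w).val + 1 = n := by omega
      rw [h3, Nat.mod_self] at hval
      omega

lemma walk_lb (hn : 3 ≤ n) {u v : Fin n} (p : (cycleGraph n).Walk u v) :
    cdist n u v ≤ p.length := by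
  haveI : NeZero n := ⟨by omega⟩
  induction p with
  | nil => simp [cdist, sub_self]
  | @cons a b c h p ih =>
    rw [Walk.length_cons]
    have := lipschitz hn c h
    omega

lemma dist_eq (hn : 3 ≤ n) (u v : Fin n) :
    (cycleGraph n).dist u v = cdist n u v := by
  haveI : NeZero n := ⟨by omega⟩
  refine le_antisymm (le_min (dist_le_vsub hn u v) ?_) ?_
  · by_cases huv : u = v
    · subst huv; simp [sub_self, SimpleGraph.dist_self]
    · have h1 := sub_val_add u v huv
      have h2 := dist_le_vsub hn v u
      rw [SimpleGraph.dist_comm]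
      omega
  · obtain ⟨p, hp⟩ := (conn hn).exists_walk_length_eq_dist u v
    rw [← hp]
    exact walk_lb hn p


lemma good1 (hn : 3 ≤ n) {u v x : Fin n} (ha : (v - u).val ≤ n / 2)
    (ht : (u - x).val ≤ n / 2 - (v - u).val) :
    LiesBetween (cycleGraph n) x u v := by
  haveI : NeZero n := ⟨by omega⟩
  have hvx : v - x = (v - u) + (u - x) := by ring
  have h2 : (v - x).val = (v - u).val + (u - x).val := by
    rw [hvx]
    exact Fin.val_add_eq_of_add_lt (by omega)
  unfold LiesBetween
  rw [dist_eq hn, dist_eq hn, dist_eq hn]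
  unfold cdist
  rw [h2]
  omega

lemma good2 (hn : 3 ≤ n) {u v x : Fin n} (hne : u ≠ v) (ha : (v - u).val ≤ n / 2)
    (ht : (x - v).val ≤ n / 2 - (v - u).val) :
    LiesBetween (cycleGraph n) x v u := by
  haveI : NeZero n := ⟨by omega⟩
  have hxu : x - u = (x - v) + (v - u) := by ring
  have h2 : (x - u).val = (x - v).val + (v - u).val := by
    rw [hxu]
    exact Fin.val_add_eq_of_add_lt (by omega)
  have h3 := sub_val_add u v hne
  unfold LiesBetween
  rw [show (cycleGraph n).dist x v = (cycleGraph n).dist v x from SimpleGraph.dist_comm,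
    show (cycleGraph n).dist x u = (cycleGraph n).dist u x from SimpleGraph.dist_comm]
  rw [dist_eq hn, dist_eq hn, dist_eq hn]
  unfold cdist
  rw [h2]
  have h4 := (v - u).isLt
  omega

lemma upper_aux (hn : 3 ≤ n) {u v : Fin n} (hne : u ≠ v) (ha : (v - u).val ≤ n / 2) :
    ∃ x : Fin n, x.val < (n + 1) / 2 ∧ StronglyResolves (cycleGraph n) x u v := by
  haveI : NeZero n := ⟨by omega⟩
  by_cases hu : u.val < (n + 1) / 2
  · exact ⟨u, hu, Or.inl (good1 hn ha (by simp [sub_self]))⟩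
  by_cases hv : v.val < (n + 1) / 2
  · exact ⟨v, hv, Or.inr (good2 hn hne ha (by simp [sub_self]))⟩
  · have h0 : (0 : Fin n).val = 0 := Fin.val_zero n
    have hu' := u.isLt
    have hv' := v.isLt
    have hne' : u.val ≠ v.val := fun h => hne (Fin.ext h)
    refine ⟨0, by omega, Or.inr (good2 hn hne ha ?_)⟩
    have hval0 : ((0 : Fin n) - v).val = n - v.val := by
      rw [val_sub, h0, if_neg (by omega)]
      omega
    have h2 := val_sub u v
    rcases le_or_gt u.val v.val with hle | hle
    · rw [hval0, h2, if_pos hle]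
      rw [h2, if_pos hle] at ha
      omega
    · exfalso
      rw [h2, if_neg (not_le.mpr hle)] at ha
      omega

lemma upper (hn : 3 ≤ n) :
    ∃ W : Set (Fin n), W.ncard = (n + 1) / 2 ∧
      IsStrongResolvingSet (cycleGraph n) W := by
  classical
  haveI : NeZero n := ⟨by omega⟩
  refine ⟨↑(Finset.univ.filter fun x : Fin n => x.val < (n + 1) / 2), ?_, ?_⟩
  · rw [Set.ncard_coe_finset]
    have he : (Finset.univ.filter fun x : Fin n => x.val < (n + 1) / 2)
        = Finset.Iio (⟨(n + 1) / 2, by omega⟩ : Fin n) := by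
      ext x
      simp [Fin.lt_def]
    rw [he, Fin.card_Iio]
  · intro u v huv
    have hsum := sub_val_add u v huv
    have h1 := (v - u).isLt
    rcases le_or_gt (v - u).val (n / 2) with ha | ha
    · obtain ⟨x, hx, hres⟩ := upper_aux hn huv ha
      exact ⟨x, by simp [hx], hres⟩
    · have ha' : (u - v).val ≤ n / 2 := by omega
      obtain ⟨x, hx, hres⟩ := upper_aux hn (Ne.symm huv) ha'
      exact ⟨x, by simp [hx], hres.symm⟩

lemma diam_le (hn : 3 ≤ n) (u v : Fin n) : (cycleGraph n).dist u v ≤ n / 2 := by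
  rw [dist_eq hn]
  have := (v - u).isLt
  unfold cdist
  omega

lemma dist_zero_eq (hn : 3 ≤ n) {u v : Fin n} (h : (cycleGraph n).dist u v = 0) :
    u = v := by
  haveI : NeZero n := ⟨by omega⟩
  rw [dist_eq hn] at h
  unfold cdist at h
  have h1 := (v - u).isLt
  have h2 : (v - u).val = 0 := by omega
  exact (sub_eq_zero.mp (Fin.ext (by simpa using h2))).symm

lemma pair_forced (hn : 3 ≤ n) [NeZero n] {W : Set (Fin n)}
    (hW : IsStrongResolvingSet (cycleGraph n) W) (i : Fin n) :
    i ∈ W ∨ i + ((n / 2 : ℕ) : Fin n) ∈ W := by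
  set k : Fin n := ((n / 2 : ℕ) : Fin n) with hk
  have hkval : k.val = n / 2 := by
    rw [hk, Fin.val_natCast]
    exact Nat.mod_eq_of_lt (by omega)
  have hne : i ≠ i + k := by
    intro h
    have : k = 0 := by
      have := (left_eq_add).mp h
      exact this
    rw [this] at hkval
    simp at hkval
    omega
  obtain ⟨x, hxW, hres⟩ := hW i (i + k) hne
  have hd : (cycleGraph n).dist i (i + k) = n / 2 := by
    rw [dist_eq hn]
    unfold cdist
    rw [add_sub_cancel_left, hkval]
    omega
  rcases hres with h | h
  · -- dist x i + dist i (i+k) = dist x (i+k)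
    unfold LiesBetween at h
    rw [hd] at h
    have hle := diam_le hn x (i + k)
    have h0 : (cycleGraph n).dist x i = 0 := by omega
    have : x = i := dist_zero_eq hn h0
    left; rwa [← this]
  · unfold LiesBetween at h
    have hd' : (cycleGraph n).dist (i + k) i = n / 2 := by
      rw [SimpleGraph.dist_comm]; exact hd
    rw [hd'] at h
    have hle := diam_le hn x i
    have h0 : (cycleGraph n).dist x (i + k) = 0 := by omega
    have : x = i + k := dist_zero_eq hn h0
    right; rwa [← this]

lemma lower (hn : 3 ≤ n) {W : Set (Fin n)}
    (hW : IsStrongResolvingSet (cycleGraph n) W) : (n + 1) / 2 ≤ W.ncard := by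
  classical
  haveI : NeZero n := ⟨by omega⟩
  set k : Fin n := ((n / 2 : ℕ) : Fin n) with hk
  have hWfin : W.Finite := Set.toFinite W
  set f : Fin n → Fin n := fun i => if i ∈ W then i else i + k with hf
  have hmaps : ∀ i : Fin n, f i ∈ hWfin.toFinset := by
    intro i
    rw [Set.Finite.mem_toFinset]
    by_cases hi : i ∈ W
    · simp [hf, hi]
    · rcases pair_forced hn hW i with h | h
      · exact absurd h hi
      · simp only [hf, if_neg hi]
        exact h
  have hcard : (Finset.univ : Finset (Fin n)).card ≤ 2 * hWfin.toFinset.card := by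
    apply Finset.card_le_mul_card_image_of_maps_to (fun i _ => hmaps i)
    intro b _
    have hsub : (Finset.univ.filter fun i => f i = b) ⊆ {b, b - k} := by
      intro i hi
      simp only [Finset.mem_filter, Finset.mem_univ, true_and] at hi
      by_cases hiW : i ∈ W
      · simp only [hf, if_pos hiW] at hi
        simp [hi]
      · simp only [hf, if_neg hiW] at hi
        have : i = b - k := eq_sub_of_add_eq hi
        simp [this]
    calc (Finset.univ.filter fun i => f i = b).card
        ≤ ({b, b - k} : Finset (Fin n)).card := Finset.card_le_card hsub
      _ ≤ 2 := Finset.card_insert_le _ _ |>.trans (by simp)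
  have h1 : (Finset.univ : Finset (Fin n)).card = n := by simp
  have h2 : W.ncard = hWfin.toFinset.card := Set.ncard_eq_toFinset_card W hWfin
  omega

end CycleSdim

/-- For `n ≥ 3`, the strong metric dimension of the cycle `C_n` is `⌈n/2⌉`. -/
theorem sdim_cycleGraph (n : ℕ) (h3 : 3 ≤ n) :
    sdim (cycleGraph n) = (n + 1) / 2 := by
  obtain ⟨W, hc, hr⟩ := CycleSdim.upper h3
  refine le_antisymm (Nat.sInf_le ⟨W, hc, hr⟩) ?_
  refine le_csInf ⟨(n + 1) / 2, W, hc, hr⟩ ?_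
  rintro c ⟨W', rfl, hr'⟩
  exact CycleSdim.lower h3 hr'
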